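/- Overfitting lower bound via no-free-lunch: let X be finite with |X| ≥ 2m and consider 0-1 loss. For any learning algorithm A receiving m labeled examples, there exists a function f : X → {0,1} and the uniform distribution D_f on X labeled by f, such that the expected risk of A(S) is at least 1/4, even though min over all functions of the risk is 0. -/

import Mathlib

open Finset

/-- Overfitting lower bound via no-free-lunch: let `X` be finite
with `|X| ≥ 2m` and consider the 0-1 loss. For any learning algorithm `A`
receiving `m` labeled examples, there exists `f : X → {0,1}` such that, for the
uniform distribution on `X` labeled by `f`, the expected risk of `A(S)` (over
the i.i.d. sample of `m` locations) is at least `1/4`, even though the minimal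
risk (attained by `f` itself) is `0`. -/
theorem no_free_lunch_quarter_lower_bound
    {X : Type*} [Fintype X] [DecidableEq X]
    (m : ℕ) (hm : 0 < m) (hcard : 2 * m ≤ Fintype.card X)
    (A : (Fin m → X × Bool) → (X → Bool))
    (risk : (X → Bool) → (X → Bool) → ℝ)
    (hrisk : ∀ f h, risk f h =
      ((Finset.univ.filter fun x => h x ≠ f x).card : ℝ) / Fintype.card X) :
    ∃ f : X → Bool,
      (1 / 4 : ℝ) ≤
        (∑ xs : Fin m → X, risk f (A fun i => (xs i, f (xs i)))) /
          ((Fintype.card X : ℝ) ^ m)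
      ∧ risk f f = 0 := by
  classical
  set N := Fintype.card X with hN
  have hNpos : 0 < N := lt_of_lt_of_le (by omega) hcard
  have hNR : (0:ℝ) < (N:ℝ) := by exact_mod_cast hNpos
  -- pairing lemma: for x outside the sample, half the functions are misclassified at x
  have key : ∀ (xs : Fin m → X) (x : X), (∀ i, xs i ≠ x) →
      ∑ f : X → Bool,
        (if (A fun i => (xs i, f (xs i))) x ≠ f x then (1:ℝ) else 0)
        = 2 ^ N / 2 := by
    intro xs x hx
    set ι : (X → Bool) → ℝ :=
      fun f => if (A fun i => (xs i, f (xs i))) x ≠ f x then (1:ℝ) else 0 with hι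
    have hinv : Function.Involutive
        (fun f : X → Bool => Function.update f x (!f x)) := by
      intro f
      funext y
      by_cases hy : y = x
      · subst hy; simp
      · simp [Function.update_of_ne hy]
    have hpair : ∀ f, ι f + ι (Function.update f x (!f x)) = 1 := by
      intro f
      have hA : (A fun i => (xs i, Function.update f x (!f x) (xs i)))
          = A fun i => (xs i, f (xs i)) := by
        have harg : (fun i => (xs i, Function.update f x (!f x) (xs i)))
            = fun i => (xs i, f (xs i)) := by
          funext i
          simp [Function.update_of_ne (hx i)]
        rw [harg]
      simp only [hι, hA, Function.update_self]
      cases hb : f x <;> cases hAb : (A fun i => (xs i, f (xs i))) x <;>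
        simp [hb, hAb]
    have hsum : ∑ f : X → Bool, ι (Function.update f x (!f x))
        = ∑ f : X → Bool, ι f := Equiv.sum_comp hinv.toPerm ι
    have h2 : 2 * ∑ f : X → Bool, ι f = ∑ _f : X → Bool, (1:ℝ) := by
      rw [two_mul]
      nth_rewrite 2 [← hsum]
      rw [← Finset.sum_add_distrib]
      exact Finset.sum_congr rfl fun f _ => hpair f
    have hcardf : (∑ _f : X → Bool, (1:ℝ)) = 2 ^ N := by
      rw [Finset.sum_const, card_univ, Fintype.card_fun]
      simp [hN]
    rw [hcardf] at h2
    linarith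
  -- per-sample lower bound on the sum over all labelings f
  have main : ∀ xs : Fin m → X,
      (2:ℝ) ^ N / 2 * (((N:ℝ) - m) / N) ≤
        ∑ f : X → Bool, risk f (A fun i => (xs i, f (xs i))) := by
    intro xs
    set ι : (X → Bool) → X → ℝ :=
      fun f x => if (A fun i => (xs i, f (xs i))) x ≠ f x then (1:ℝ) else 0 with hι
    have hrw : ∀ f : X → Bool,
        risk f (A fun i => (xs i, f (xs i))) = (∑ x : X, ι f x) / N := by
      intro f
      rw [hrisk]
      congr 1
      rw [Finset.sum_boole]
    have hineq : (2:ℝ) ^ N / 2 * ((N:ℝ) - m) ≤ ∑ f : X → Bool, ∑ x : X, ι f x := by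
      rw [Finset.sum_comm]
      set S : Finset X := Finset.univ.image xs with hS
      have hSc : ∀ x ∈ Sᶜ, ∑ f : X → Bool, ι f x = 2 ^ N / 2 := by
        intro x hx
        apply key
        intro i hi
        exact (Finset.mem_compl.mp hx) (Finset.mem_image.mpr ⟨i, Finset.mem_univ i, hi⟩)
      have h1 : ∑ x ∈ Sᶜ, ∑ f : X → Bool, ι f x ≤ ∑ x : X, ∑ f : X → Bool, ι f x := by
        apply Finset.sum_le_sum_of_subset_of_nonneg (Finset.subset_univ _)
        intro x _ _
        apply Finset.sum_nonneg
        intro f _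
        simp only [hι]
        split_ifs <;> norm_num
      have h2 : ∑ x ∈ Sᶜ, ∑ f : X → Bool, ι f x = (Sᶜ.card : ℝ) * (2 ^ N / 2) := by
        rw [Finset.sum_congr rfl hSc, Finset.sum_const, nsmul_eq_mul]
      have h3 : ((N:ℝ) - m) ≤ (Sᶜ.card : ℝ) := by
        have hSm : S.card ≤ m := le_trans Finset.card_image_le (by simp)
        have hSN : S.card ≤ N := Finset.card_le_univ S
        have hc : Sᶜ.card = N - S.card := by rw [Finset.card_compl]
        rw [hc, Nat.cast_sub hSN]
        have : (S.card : ℝ) ≤ (m : ℝ) := by exact_mod_cast hSm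
        linarith
      have hpow : (0:ℝ) < (2:ℝ) ^ N / 2 := by positivity
      calc (2:ℝ) ^ N / 2 * ((N:ℝ) - m) ≤ (2:ℝ) ^ N / 2 * (Sᶜ.card : ℝ) :=
            mul_le_mul_of_nonneg_left h3 (le_of_lt hpow)
        _ = ∑ x ∈ Sᶜ, ∑ f : X → Bool, ι f x := by rw [h2]; ring
        _ ≤ _ := h1
    calc (2:ℝ) ^ N / 2 * (((N:ℝ) - m) / N)
        = ((2:ℝ) ^ N / 2 * ((N:ℝ) - m)) / N := by ring
      _ ≤ (∑ f : X → Bool, ∑ x : X, ι f x) / N := by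
          exact div_le_div_of_nonneg_right hineq hNR.le
      _ = ∑ f : X → Bool, risk f (A fun i => (xs i, f (xs i))) := by
          rw [Finset.sum_div]
          exact Finset.sum_congr rfl fun f _ => (hrw f).symm
  -- total double-counting bound
  have total : (2:ℝ) ^ N * ((N:ℝ) ^ m / 4) ≤
      ∑ f : X → Bool, ∑ xs : Fin m → X, risk f (A fun i => (xs i, f (xs i))) := by
    rw [Finset.sum_comm]
    have hb : ∀ xs : Fin m → X, (2:ℝ) ^ N / 4 ≤
        ∑ f : X → Bool, risk f (A fun i => (xs i, f (xs i))) := by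
      intro xs
      refine le_trans ?_ (main xs)
      have hhalf : (1:ℝ) / 2 ≤ ((N:ℝ) - m) / N := by
        rw [le_div_iff₀ hNR]
        have h2m : (2 * m : ℝ) ≤ N := by exact_mod_cast hcard
        push_cast at h2m ⊢
        linarith
      have hpow : (0:ℝ) < (2:ℝ) ^ N / 2 := by positivity
      calc (2:ℝ) ^ N / 4 = (2:ℝ) ^ N / 2 * (1 / 2) := by ring
        _ ≤ (2:ℝ) ^ N / 2 * (((N:ℝ) - m) / N) :=
            mul_le_mul_of_nonneg_left hhalf (le_of_lt hpow)
    calc (2:ℝ) ^ N * ((N:ℝ) ^ m / 4)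
        = ∑ _xs : Fin m → X, (2:ℝ) ^ N / 4 := by
          rw [Finset.sum_const, card_univ, Fintype.card_fun, Fintype.card_fin,
            nsmul_eq_mul]
          push_cast
          ring
      _ ≤ _ := Finset.sum_le_sum fun xs _ => hb xs
  -- extract a good f
  obtain ⟨f, -, hf⟩ := Finset.exists_le_of_sum_le (Finset.univ_nonempty)
    (show ∑ _f : X → Bool, (N:ℝ) ^ m / 4 ≤
        ∑ f : X → Bool, ∑ xs : Fin m → X, risk f (A fun i => (xs i, f (xs i))) by
      rw [Finset.sum_const, card_univ, Fintype.card_fun, Fintype.card_bool,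
        nsmul_eq_mul]
      push_cast
      calc (2:ℝ) ^ N * ((N:ℝ) ^ m / 4) ≤ _ := total)
  refine ⟨f, ?_, ?_⟩
  · rw [le_div_iff₀ (by positivity : (0:ℝ) < (N:ℝ) ^ m)]
    linarith
  · rw [hrisk]
    simp
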